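/- Let K ≥ 1 be an integer and σ_1, …, σ_K > 0 real numbers with σ_1² ≤ σ_2² ≤ … ≤ σ_K². Define f on strings (e_1, …, e_k) with entries e_j ∈ [1/2, 1] and k ≤ K by f((e_1, …, e_k)) = (1/2)·log[(1 + ∑_{j=1}^k e_j/σ_j²)·(1 + ∑_{j=1}^k (1 − e_j)/σ_j²)]. Then f is K-diminishing: for all strings M ⪯ N with entries in [1/2, 1] and |N| ≤ K − 1, and every a ∈ [1/2, 1], f(M ⊕ (a)) − f(M) ≥ f(N ⊕ (a)) − f(N). -/

import Mathlib

private lemma stmt19_core (AM BM AN BN p q α β : ℝ) (hAM : 1 ≤ AM) (hAN : AM ≤ AN)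
    (hBM : 1 ≤ BM) (hBN : BM ≤ BN) (hq : 0 < q) (hpq : q ≤ p)
    (hα : 0 ≤ α) (hβ : 0 ≤ β) :
    (AN + α*q) * (BN + β*q) * (AM*BM) ≤ (AM + α*p) * (BM + β*p) * (AN*BN) := by
  have hp : 0 < p := hq.trans_le hpq
  have hAM0 : (0:ℝ) < AM := by linarith
  have hBM0 : (0:ℝ) < BM := by linarith
  have e1 : q * AM ≤ p * AN := mul_le_mul hpq hAN hAM0.le hp.le
  have e2 : q * BM ≤ p * BN := mul_le_mul hpq hBN hBM0.le hp.le
  have H1 : α * (q * AM) * (BM * BN) ≤ α * (p * AN) * (BM * BN) :=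
    mul_le_mul_of_nonneg_right (mul_le_mul_of_nonneg_left e1 hα)
      (mul_nonneg hBM0.le (by linarith))
  have H2 : β * (q * BM) * (AM * AN) ≤ β * (p * BN) * (AM * AN) :=
    mul_le_mul_of_nonneg_right (mul_le_mul_of_nonneg_left e2 hβ)
      (mul_nonneg hAM0.le (by linarith))
  have H3 : (α * q) * (β * q) * (AM * BM) ≤ (α * p) * (β * p) * (AN * BN) := by
    have : (α * q) * (β * q) ≤ (α * p) * (β * p) :=
      mul_le_mul (mul_le_mul_of_nonneg_left hpq hα) (mul_le_mul_of_nonneg_left hpq hβ)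
        (mul_nonneg hβ hq.le) (mul_nonneg hα hp.le)
    exact mul_le_mul this (mul_le_mul hAN hBN hBM0.le (by linarith))
      (mul_nonneg hAM0.le hBM0.le)
      (mul_nonneg (mul_nonneg hα hp.le) (mul_nonneg hβ hp.le))
  nlinarith [H1, H2, H3]

private lemma stmt19_final (AM BM AN BN A' B' C' D' sM sN α β : ℝ)
    (hAM : 1 ≤ AM) (hAN : AM ≤ AN) (hBM : 1 ≤ BM) (hBN : BM ≤ BN)
    (hsM : 0 < sM) (hs : sM ≤ sN) (hα : 0 ≤ α) (hβ : 0 ≤ β)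
    (hA' : A' = AM + α/sM) (hB' : B' = BM + β/sM)
    (hC' : C' = AN + α/sN) (hD' : D' = BN + β/sN) :
    1/2 * Real.log (A' * B') - 1/2 * Real.log (AM * BM)
      ≥ 1/2 * Real.log (C' * D') - 1/2 * Real.log (AN * BN) := by
  subst hA' hB' hC' hD'
  have hsN : 0 < sN := hsM.trans_le hs
  have hq : (0:ℝ) < 1/sN := by positivity
  have hpq : 1/sN ≤ 1/sM := one_div_le_one_div_of_le hsM hs
  have key := stmt19_core AM BM AN BN (1/sM) (1/sN) α β hAM hAN hBM hBN hq hpq hα hβ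
  rw [div_eq_mul_one_div α sM, div_eq_mul_one_div β sM,
      div_eq_mul_one_div α sN, div_eq_mul_one_div β sN]
  have hAM0 : (0:ℝ) < AM := by linarith
  have hBM0 : (0:ℝ) < BM := by linarith
  have hAN0 : (0:ℝ) < AN := by linarith
  have hBN0 : (0:ℝ) < BN := by linarith
  have hA'0 : (0:ℝ) < AM + α * (1/sM) := by positivity
  have hB'0 : (0:ℝ) < BM + β * (1/sM) := by positivity
  have hC'0 : (0:ℝ) < AN + α * (1/sN) := by positivity
  have hD'0 : (0:ℝ) < BN + β * (1/sN) := by positivity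
  have hlog : Real.log ((AN + α*(1/sN)) * (BN + β*(1/sN)) * (AM*BM))
      ≤ Real.log ((AM + α*(1/sM)) * (BM + β*(1/sM)) * (AN*BN)) :=
    Real.log_le_log (by positivity) key
  rw [Real.log_mul (mul_pos hC'0 hD'0).ne' (mul_pos hAM0 hBM0).ne',
      Real.log_mul (mul_pos hA'0 hB'0).ne' (mul_pos hAN0 hBN0).ne'] at hlog
  linarith

theorem stmt19 (K : ℕ) (hK : 1 ≤ K) (σ : ℕ → ℝ)
    (hσpos : ∀ j : ℕ, 1 ≤ j → j ≤ K → 0 < σ j)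
    (hσmono : ∀ j : ℕ, 1 ≤ j → j + 1 ≤ K → (σ j) ^ 2 ≤ (σ (j + 1)) ^ 2)
    (f : List ℝ → ℝ)
    (hf : ∀ M : List ℝ, f M =
      (1 / 2) * Real.log
        ((1 + ((M.zipIdx.map Prod.swap).map (fun je => je.2 / (σ (je.1 + 1)) ^ 2)).sum) *
          (1 + ((M.zipIdx.map Prod.swap).map (fun je => (1 - je.2) / (σ (je.1 + 1)) ^ 2)).sum))) :
    ∀ M N : List ℝ, M <+: N → N.length ≤ K - 1 →
      (∀ x ∈ N, 1 / 2 ≤ x ∧ x ≤ 1) →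
      ∀ a : ℝ, 1 / 2 ≤ a → a ≤ 1 →
        f (M ++ [a]) - f M ≥ f (N ++ [a]) - f N := by
  intro M N hMN hNlen hmem a ha1 ha2
  obtain ⟨T, rfl⟩ := hMN
  have hmemM : ∀ x ∈ M, 1/2 ≤ x ∧ x ≤ 1 := fun x hx => hmem x (List.mem_append_left T hx)
  have hmemT : ∀ x ∈ T, 1/2 ≤ x ∧ x ≤ 1 := fun x hx => hmem x (List.mem_append_right M hx)
  -- monotonicity of σ² along a chain
  have mono : ∀ (d i : ℕ), 1 ≤ i → i + d ≤ K → σ i ^ 2 ≤ σ (i + d) ^ 2 := by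
    intro d
    induction d with
    | zero => intro i _ _; simp
    | succ d ih =>
        intro i hi h
        have h1 : σ i ^ 2 ≤ σ (i + d) ^ 2 := ih i hi (by omega)
        have h2 : σ (i + d) ^ 2 ≤ σ (i + d + 1) ^ 2 := hσmono (i + d) (by omega) (by omega)
        have : i + (d + 1) = i + d + 1 := by omega
        rw [this]; exact h1.trans h2
  -- nonnegativity of partial sums
  have keynn : ∀ (L : List ℝ) (n : ℕ), (∀ x ∈ L, 1/2 ≤ x ∧ x ≤ 1) →
      0 ≤ (((L.zipIdx n).map Prod.swap).map (fun je : ℕ × ℝ => je.2 / (σ (je.1 + 1)) ^ 2)).sum ∧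
      0 ≤ (((L.zipIdx n).map Prod.swap).map (fun je : ℕ × ℝ => (1 - je.2) / (σ (je.1 + 1)) ^ 2)).sum := by
    intro L n hL
    constructor <;>
    · refine List.sum_nonneg ?_
      intro x hx
      obtain ⟨je, hje, rfl⟩ := List.mem_map.1 hx
      have h2 := hL je.2 (by obtain ⟨p, hp, rfl⟩ := List.mem_map.1 hje; exact List.fst_mem_of_mem_zipIdx hp)
      exact div_nonneg (by linarith [h2.1, h2.2]) (sq_nonneg _)
  have esum : ∀ (g : ℕ × ℝ → ℝ) (L : List ℝ) (x : ℝ),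
      ((((L ++ [x]).zipIdx.map Prod.swap).map g).sum) = ((L.zipIdx.map Prod.swap).map g).sum + g (L.length, x) := by
    intro g L x; simp [List.zipIdx_append]
  have esum2 : ∀ (g : ℕ × ℝ → ℝ),
      ((((M ++ T).zipIdx.map Prod.swap).map g).sum) = ((M.zipIdx.map Prod.swap).map g).sum + (((T.zipIdx M.length).map Prod.swap).map g).sum := by
    intro g; simp [List.zipIdx_append]
  have hlenN : M.length + T.length ≤ K - 1 := by
    have := hNlen; simpa [List.length_append] using this
  rw [hf (M ++ [a]), hf M, hf ((M ++ T) ++ [a]), hf (M ++ T)]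
  simp only [esum, esum2, List.length_append]
  set s1 := ((M.zipIdx.map Prod.swap).map (fun je : ℕ × ℝ => je.2 / (σ (je.1 + 1)) ^ 2)).sum with hs1def
  set s2 := ((M.zipIdx.map Prod.swap).map (fun je : ℕ × ℝ => (1 - je.2) / (σ (je.1 + 1)) ^ 2)).sum with hs2def
  set t1 := (((T.zipIdx M.length).map Prod.swap).map (fun je : ℕ × ℝ => je.2 / (σ (je.1 + 1)) ^ 2)).sum with ht1def
  set t2 := (((T.zipIdx M.length).map Prod.swap).map (fun je : ℕ × ℝ => (1 - je.2) / (σ (je.1 + 1)) ^ 2)).sum with ht2def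
  have hs12 : 0 ≤ s1 ∧ 0 ≤ s2 := keynn M 0 hmemM
  have ht12 : 0 ≤ t1 ∧ 0 ≤ t2 := keynn T M.length hmemT
  have hsMpos : 0 < σ (M.length + 1) ^ 2 := by
    have := hσpos (M.length + 1) (by omega) (by omega)
    positivity
  have hsle : σ (M.length + 1) ^ 2 ≤ σ (M.length + T.length + 1) ^ 2 := by
    have := mono T.length (M.length + 1) (by omega) (by omega)
    have h : M.length + 1 + T.length = M.length + T.length + 1 := by omega
    rwa [h] at this
  exact stmt19_final (1 + s1) (1 + s2) (1 + (s1 + t1)) (1 + (s2 + t2)) _ _ _ _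
    (σ (M.length + 1) ^ 2) (σ (M.length + T.length + 1) ^ 2) a (1 - a)
    (by linarith [hs12.1]) (by linarith [ht12.1]) (by linarith [hs12.2]) (by linarith [ht12.2])
    hsMpos hsle (by linarith) (by linarith)
    (by ring) (by ring) (by ring) (by ring)
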